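/- For every integer k ≥ 1 and all integers j₁, …, j_{2k} with j₁ + ⋯ + j_{2k} = 0, the full symmetrization over S_{2k} reduces to a symmetrization over the first 2k−1 indices: Z_{j₁…j_{2k}} = (1/(2k−1)!) Σ_{π ∈ S_{2k−1}} N_{j_{π(1)} … j_{π(2k−1)} j_{2k}}, where S_{2k−1} is the set of permutations of {1, …, 2k−1}. -/

import Mathlib

open scoped BigOperators

/-- `f(n) = n (n+j₁)(n+j₁+j₂)⋯(n+j₁+⋯+j_{2k-1})`. -/
noncomputable def prodPoly (k : ℕ) (j : Fin (2 * k) → ℤ) (n : ℤ) : ℤ :=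
  ∏ m : Fin (2 * k), (n + ∑ i ∈ Finset.Iio m, j i)

/-- `N_{j₁…j_{2k}} = Σ_{n ∈ ℤ} (|f(n)| − f(n))` (a finite sum). -/
noncomputable def Ncoef (k : ℕ) (j : Fin (2 * k) → ℤ) : ℤ :=
  ∑ᶠ n : ℤ, (|prodPoly k j n| - prodPoly k j n)

/-- The symmetrized coefficients `Z_{j₁…j_{2k}}`. -/
noncomputable def Zcoef (k : ℕ) (j : Fin (2 * k) → ℤ) : ℚ :=
  if ∑ i, j i = 0 then
    (1 / (Nat.factorial (2 * k) : ℚ)) *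
      ∑ π : Equiv.Perm (Fin (2 * k)), (Ncoef k (j ∘ π) : ℚ)
  else 0




namespace ZAux

/-- cyclic shift `i ↦ i+1 mod 2k`. -/
def cyc (k : ℕ) : Equiv.Perm (Fin (2 * k)) where
  toFun i := if h : (i : ℕ) + 1 < 2 * k then ⟨(i : ℕ) + 1, h⟩ else ⟨0, i.pos⟩
  invFun i := if h : 0 < (i : ℕ) then ⟨(i : ℕ) - 1, by have := i.isLt; omega⟩
              else ⟨2 * k - 1, by have := i.pos; omega⟩
  left_inv i := by
    have hi := i.isLt
    dsimp only
    split_ifs with h h' h' <;> (apply Fin.ext; simp only [Fin.val_mk] at h' ⊢) <;> omega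
  right_inv i := by
    have hi := i.isLt
    dsimp only
    split_ifs with h h' h' <;> (apply Fin.ext; simp only [Fin.val_mk] at h' ⊢) <;> omega

lemma cyc_val (k : ℕ) (i : Fin (2 * k)) :
    ((cyc k i : Fin (2 * k)) : ℕ) = ((i : ℕ) + 1) % (2 * k) := by
  have hi := i.isLt
  simp only [cyc, Equiv.coe_fn_mk]
  split_ifs with h
  · exact (Nat.mod_eq_of_lt h).symm
  · have : (i : ℕ) + 1 = 2 * k := by omega
    simp [this]

lemma cyc_pow_val (k : ℕ) (e : ℕ) (i : Fin (2 * k)) :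
    ((((cyc k) ^ e) i : Fin (2 * k)) : ℕ) = ((i : ℕ) + e) % (2 * k) := by
  induction e generalizing i with
  | zero => simp [Nat.mod_eq_of_lt i.isLt]
  | succ e ih =>
      rw [pow_succ, Equiv.Perm.mul_apply]
      rw [ih (cyc k i), cyc_val, Nat.mod_add_mod]
      ring_nf

end ZAux

namespace ZAux

/-- extend a permutation of `Fin (2k-1)` to `Fin (2k)` fixing the last element. -/
def extPerm (k : ℕ) (π : Equiv.Perm (Fin (2 * k - 1))) : Equiv.Perm (Fin (2 * k)) where
  toFun i := if h : (i : ℕ) < 2 * k - 1 then Fin.castLE (Nat.sub_le _ _) (π ⟨(i : ℕ), h⟩) else i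
  invFun i := if h : (i : ℕ) < 2 * k - 1 then Fin.castLE (Nat.sub_le _ _) (π⁻¹ ⟨(i : ℕ), h⟩) else i
  left_inv i := by
    dsimp only
    split_ifs with h h'
    · apply Fin.ext
      simp [Fin.castLE, Fin.eta]
    · exact absurd (by simpa using (π ⟨(i : ℕ), h⟩).isLt) h'
    · rfl
  right_inv i := by
    dsimp only
    split_ifs with h h'
    · apply Fin.ext
      simp [Fin.castLE, Fin.eta]
    · exact absurd (by simpa using (π⁻¹ ⟨(i : ℕ), h⟩).isLt) h'
    · rfl

lemma extPerm_apply (k : ℕ) (π : Equiv.Perm (Fin (2 * k - 1))) (i : Fin (2 * k)) :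
    extPerm k π i = if h : (i : ℕ) < 2 * k - 1 then
      Fin.castLE (Nat.sub_le _ _) (π ⟨(i : ℕ), h⟩) else i := rfl

lemma extPerm_val_lt_iff (k : ℕ) (π : Equiv.Perm (Fin (2 * k - 1))) (i : Fin (2 * k)) :
    ((extPerm k π i : Fin (2 * k)) : ℕ) < 2 * k - 1 ↔ (i : ℕ) < 2 * k - 1 := by
  rw [extPerm_apply]
  split_ifs with h
  · simp only [Fin.coe_castLE]
    exact ⟨fun _ => h, fun _ => (π ⟨(i : ℕ), h⟩).isLt⟩
  · exact Iff.rfl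

end ZAux

namespace ZAux

lemma sum_Iio_cyc (k : ℕ) (j : Fin (2 * k) → ℤ) (hj : ∑ i, j i = 0) (m : Fin (2 * k)) :
    ∑ i ∈ Finset.Iio m, j (cyc k i)
      = (∑ i ∈ Finset.Iio (cyc k m), j i) - j ⟨0, m.pos⟩ := by
  have hinj : ∀ x ∈ Finset.Iio m, ∀ y ∈ Finset.Iio m, cyc k x = cyc k y → x = y :=
    fun x _ y _ h => (cyc k).injective h
  rw [← Finset.sum_image hinj]
  by_cases h : (m : ℕ) + 1 < 2 * k
  · have hcm : cyc k m = ⟨(m : ℕ) + 1, h⟩ := by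
      apply Fin.ext; rw [cyc_val]; exact Nat.mod_eq_of_lt h
    have himg : (Finset.Iio m).image (cyc k)
        = (Finset.Iio (cyc k m)).erase ⟨0, m.pos⟩ := by
      ext x
      simp only [Finset.mem_image, Finset.mem_erase, Finset.mem_Iio, Fin.lt_def, hcm,
        Fin.ext_iff, Fin.val_mk, ne_eq]
      constructor
      · rintro ⟨i, hi, hix⟩
        have hi2 : (i : ℕ) + 1 < 2 * k := by omega
        rw [cyc_val, Nat.mod_eq_of_lt hi2] at hix
        omega
      · rintro ⟨hx0, hxm⟩
        have hx : x.val < 2 * k := x.isLt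
        refine ⟨⟨(x : ℕ) - 1, by omega⟩, by simp; omega, ?_⟩
        rw [cyc_val]
        simp only [Fin.val_mk]
        rw [Nat.mod_eq_of_lt (by omega)]
        omega
    rw [himg]
    have h0mem : (⟨0, m.pos⟩ : Fin (2 * k)) ∈ Finset.Iio (cyc k m) := by
      simp [Fin.lt_def, hcm]
    rw [← Finset.add_sum_erase _ j h0mem]
    ring
  · have hm : (m : ℕ) = 2 * k - 1 := by have := m.isLt; omega
    have hcm : cyc k m = ⟨0, m.pos⟩ := by
      apply Fin.ext; rw [cyc_val]; simp [show (m : ℕ) + 1 = 2 * k by omega]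
    have hIio0 : Finset.Iio (cyc k m) = ∅ := by
      ext x; simp [Fin.lt_def, hcm]
    have himg : (Finset.Iio m).image (cyc k)
        = Finset.univ.erase ⟨0, m.pos⟩ := by
      ext x
      simp only [Finset.mem_image, Finset.mem_erase, Finset.mem_Iio, Fin.lt_def,
        Fin.ext_iff, Fin.val_mk, ne_eq, Finset.mem_univ, and_true]
      constructor
      · rintro ⟨i, hi, hix⟩
        have hi2 : (i : ℕ) + 1 < 2 * k := by omega
        rw [cyc_val, Nat.mod_eq_of_lt hi2] at hix
        omega
      · intro hx0
        have hx : x.val < 2 * k := x.isLt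
        refine ⟨⟨(x : ℕ) - 1, by omega⟩, by simp; omega, ?_⟩
        rw [cyc_val]
        simp only [Fin.val_mk]
        rw [Nat.mod_eq_of_lt (by omega)]
        omega
    rw [himg, hIio0]
    have := Finset.add_sum_erase Finset.univ j (Finset.mem_univ (⟨0, m.pos⟩ : Fin (2 * k)))
    rw [hj] at this
    simp only [Finset.sum_empty]
    omega

lemma prodPoly_cyc (k : ℕ) (h0 : 0 < 2 * k) (j : Fin (2 * k) → ℤ) (hj : ∑ i, j i = 0)
    (n : ℤ) :
    prodPoly k (fun i => j (cyc k i)) n = prodPoly k j (n - j ⟨0, h0⟩) := by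
  unfold prodPoly
  calc ∏ m : Fin (2 * k), (n + ∑ i ∈ Finset.Iio m, j (cyc k i))
      = ∏ m : Fin (2 * k), ((n - j ⟨0, h0⟩) + ∑ i ∈ Finset.Iio (cyc k m), j i) := by
        refine Finset.prod_congr rfl fun m _ => ?_
        rw [sum_Iio_cyc k j hj m]
        ring
    _ = ∏ m : Fin (2 * k), ((n - j ⟨0, h0⟩) + ∑ i ∈ Finset.Iio m, j i) :=
        Equiv.prod_comp (cyc k) fun m => (n - j ⟨0, h0⟩) + ∑ i ∈ Finset.Iio m, j i

end ZAux

namespace ZAux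

lemma Ncoef_cyc (k : ℕ) (h0 : 0 < 2 * k) (j : Fin (2 * k) → ℤ) (hj : ∑ i, j i = 0) :
    Ncoef k (fun i => j (cyc k i)) = Ncoef k j := by
  unfold Ncoef
  have h1 : ∀ n : ℤ, prodPoly k (fun i => j (cyc k i)) n = prodPoly k j (n - j ⟨0, h0⟩) :=
    prodPoly_cyc k h0 j hj
  have h2 : (∑ᶠ n : ℤ, (|prodPoly k (fun i => j (cyc k i)) n|
      - prodPoly k (fun i => j (cyc k i)) n))
      = ∑ᶠ n : ℤ, (|prodPoly k j (n - j ⟨0, h0⟩)| - prodPoly k j (n - j ⟨0, h0⟩)) := by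
    congr 1
    funext n
    rw [h1]
  rw [h2]
  have := finsum_comp_equiv (Equiv.subRight (j ⟨0, h0⟩))
    (f := fun x : ℤ => |prodPoly k j x| - prodPoly k j x)
  simpa using this

lemma Ncoef_comp_cyc_pow (k : ℕ) (h0 : 0 < 2 * k) (j : Fin (2 * k) → ℤ)
    (hj : ∑ i, j i = 0) (σ : Equiv.Perm (Fin (2 * k))) (m : ℕ) :
    Ncoef k (j ∘ ⇑(σ * (cyc k) ^ m)) = Ncoef k (j ∘ ⇑σ) := by
  induction m with
  | zero => simp
  | succ m ih =>
      rw [pow_succ, ← mul_assoc]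
      have hsum : ∑ i, (j ∘ ⇑(σ * (cyc k) ^ m)) i = 0 :=
        (Equiv.sum_comp (σ * (cyc k) ^ m) j).trans hj
      exact (Ncoef_cyc k h0 (j ∘ ⇑(σ * (cyc k) ^ m)) hsum).trans ih

/-- the counting bijection. -/
def G (k : ℕ) (p : Equiv.Perm (Fin (2 * k - 1)) × Fin (2 * k)) : Equiv.Perm (Fin (2 * k)) :=
  extPerm k p.1 * (cyc k) ^ ((p.2 : ℕ))

lemma mod_two_cases (t M : ℕ) (hM : 0 < M) (h : t < 2 * M) :
    t % M = if t < M then t else t - M := by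
  split_ifs with h'
  · exact Nat.mod_eq_of_lt h'
  · rw [Nat.mod_eq_sub_mod (le_of_not_gt h'), Nat.mod_eq_of_lt (by omega)]

lemma G_injective (k : ℕ) (hk : 1 ≤ k) : Function.Injective (G k) := by
  rintro ⟨π, a⟩ ⟨π', b⟩ hG
  have ha := a.isLt
  have hb := b.isLt
  -- first, a = b
  have hab : a = b := by
    set x : Fin (2 * k) := ⟨2 * k - 1 - (a : ℕ), by omega⟩ with hx
    have h1 : ((cyc k ^ ((a : ℕ))) x : ℕ) = 2 * k - 1 := by
      rw [cyc_pow_val]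
      simp only [hx, Fin.val_mk]
      rw [Nat.mod_eq_of_lt (by omega)]
      omega
    have hGx : (G k (π, a)) x = (G k (π', b)) x := by rw [hG]
    have hL : ((G k (π, a)) x : ℕ) = 2 * k - 1 := by
      simp only [G, Equiv.Perm.mul_apply]
      have hnot : ¬ (((cyc k ^ ((a : ℕ))) x : ℕ) < 2 * k - 1) := by omega
      rw [extPerm_apply, dif_neg hnot, h1]
    have hR : (((cyc k ^ ((b : ℕ))) x : ℕ)) = 2 * k - 1 := by
      have hGR : ((G k (π', b)) x : ℕ) = 2 * k - 1 := by rw [← hGx, hL]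
      simp only [G, Equiv.Perm.mul_apply] at hGR
      by_contra hne
      have hlt' : (((cyc k ^ ((b : ℕ))) x : ℕ)) < 2 * k - 1 := by
        have h' := ((cyc k ^ ((b : ℕ))) x).isLt; omega
      rw [extPerm_apply, dif_pos hlt'] at hGR
      have hπ := (π' ⟨_, hlt'⟩).isLt
      simp only [Fin.coe_castLE] at hGR
      omega
    rw [cyc_pow_val] at hR
    simp only [hx, Fin.val_mk] at hR
    rw [mod_two_cases _ _ (by omega) (by omega)] at hR
    apply Fin.ext
    split_ifs at hR <;> omega
  subst hab
  have hext : extPerm k π = extPerm k π' := mul_right_cancel hG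
  have : π = π' := by
    apply Equiv.ext
    intro y
    have hy := y.isLt
    have h1 : extPerm k π (Fin.castLE (Nat.sub_le _ _) y)
        = extPerm k π' (Fin.castLE (Nat.sub_le _ _) y) := by rw [hext]
    rw [extPerm_apply, extPerm_apply] at h1
    have hc : ((Fin.castLE (Nat.sub_le (2 * k) 1) y : Fin (2 * k)) : ℕ) < 2 * k - 1 := by
      simpa using hy
    rw [dif_pos hc, dif_pos hc] at h1
    have : ((π ⟨_, hc⟩ : Fin (2 * k - 1)) : ℕ) = ((π' ⟨_, hc⟩ : Fin (2 * k - 1)) : ℕ) := by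
      have := congrArg (fun z : Fin (2 * k) => (z : ℕ)) h1
      simpa using this
    have hy' : (⟨((Fin.castLE (Nat.sub_le (2 * k) 1) y : Fin (2 * k)) : ℕ), hc⟩ : Fin (2 * k - 1)) = y := by
      apply Fin.ext; simp
    rw [hy'] at this
    exact Fin.ext this
  rw [this]

lemma G_bijective (k : ℕ) (hk : 1 ≤ k) : Function.Bijective (G k) := by
  rw [Fintype.bijective_iff_injective_and_card]
  refine ⟨G_injective k hk, ?_⟩
  rw [Fintype.card_prod, Fintype.card_perm, Fintype.card_perm, Fintype.card_fin,
    Fintype.card_fin]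
  set n := 2 * k - 1 with hn
  have h2 : 2 * k = n + 1 := by omega
  rw [h2, Nat.factorial_succ]
  ring

end ZAux

/-- The full symmetrization over `S_{2k}` reduces to symmetrization over the
first `2k−1` indices, the last index being fixed:
`Z_{j₁…j_{2k}} = (1/(2k−1)!) Σ_{π ∈ S_{2k−1}} N_{j_{π(1)} … j_{π(2k−1)} j_{2k}}`. -/
theorem Zcoef_eq_partial_symmetrization (k : ℕ) (hk : 1 ≤ k)
    (j : Fin (2 * k) → ℤ) (hj : ∑ i, j i = 0) :
    Zcoef k j = (1 / (Nat.factorial (2 * k - 1) : ℚ)) *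
      ∑ π : Equiv.Perm (Fin (2 * k - 1)),
        (Ncoef k (fun i =>
          if h : (i : ℕ) < 2 * k - 1 then
            j (Fin.castLE (Nat.sub_le _ _) (π ⟨(i : ℕ), h⟩))
          else j i) : ℚ) := by
  classical
  have h0 : 0 < 2 * k := by omega
  unfold Zcoef
  rw [if_pos hj]
  have hsum1 : ∑ π : Equiv.Perm (Fin (2 * k)), (Ncoef k (j ∘ π) : ℚ)
      = ∑ p : Equiv.Perm (Fin (2 * k - 1)) × Fin (2 * k),
          (Ncoef k (j ∘ ⇑(ZAux.G k p)) : ℚ) :=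
    (Fintype.sum_bijective (ZAux.G k) (ZAux.G_bijective k hk)
      (fun p => (Ncoef k (j ∘ ⇑(ZAux.G k p)) : ℚ))
      (fun σ => (Ncoef k (j ∘ ⇑σ) : ℚ)) (fun p => rfl)).symm
  rw [hsum1]
  have hsum2 : ∑ p : Equiv.Perm (Fin (2 * k - 1)) × Fin (2 * k),
        (Ncoef k (j ∘ ⇑(ZAux.G k p)) : ℚ)
      = ∑ p : Equiv.Perm (Fin (2 * k - 1)) × Fin (2 * k),
        (Ncoef k (j ∘ ⇑(ZAux.extPerm k p.1)) : ℚ) := by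
    refine Finset.sum_congr rfl fun p _ => ?_
    have := ZAux.Ncoef_comp_cyc_pow k h0 j hj (ZAux.extPerm k p.1) ((p.2 : ℕ))
    exact_mod_cast congrArg (fun z : ℤ => (z : ℚ)) this
  rw [hsum2, Fintype.sum_prod_type]
  simp only [Finset.sum_const, Finset.card_univ, Fintype.card_fin, nsmul_eq_mul]
  have hmatch : ∀ π : Equiv.Perm (Fin (2 * k - 1)),
      (j ∘ ⇑(ZAux.extPerm k π)) = fun i : Fin (2 * k) =>
        if h : (i : ℕ) < 2 * k - 1 then
          j (Fin.castLE (Nat.sub_le _ _) (π ⟨(i : ℕ), h⟩)) else j i := by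
    intro π
    funext i
    simp only [Function.comp_apply, ZAux.extPerm_apply]
    split_ifs <;> rfl
  have hsumR : ∑ π : Equiv.Perm (Fin (2 * k - 1)),
        (Ncoef k (fun i =>
          if h : (i : ℕ) < 2 * k - 1 then
            j (Fin.castLE (Nat.sub_le _ _) (π ⟨(i : ℕ), h⟩))
          else j i) : ℚ)
      = ∑ π : Equiv.Perm (Fin (2 * k - 1)), (Ncoef k (j ∘ ⇑(ZAux.extPerm k π)) : ℚ) :=
    Finset.sum_congr rfl fun π _ => by rw [hmatch π]
  rw [hsumR, ← Finset.mul_sum]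
  have hfactNat : (2 * k).factorial = (2 * k) * (2 * k - 1).factorial := by
    set n := 2 * k - 1 with hn
    have h2 : 2 * k = n + 1 := by omega
    rw [h2, Nat.factorial_succ]
  have hfact : ((2 * k).factorial : ℚ) = (2 * k) * ((2 * k - 1).factorial : ℚ) := by
    exact_mod_cast congrArg (fun z : ℕ => (z : ℚ)) hfactNat
  rw [hfact]
  have hne1 : ((2 * k : ℕ) : ℚ) ≠ 0 := by positivity
  have hne2 : ((2 * k - 1).factorial : ℚ) ≠ 0 := by
    exact_mod_cast (Nat.factorial_ne_zero _)
  field_simp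
  push_cast
  ring
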